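/- Let P_{X^m} be the distribution of m draws without replacement from an urn of n balls of q colors with color proportions P = (p_1,…,p_q) (i.e., the first m coordinates of a uniform sample from T_n(P)), and P_X^m the i.i.d. distribution. For m < n, D(P_{X^m} ‖ P_X^m) ≤ ((q−1)/(n−1)) ∑_{t=1}^{m−1} t/(n−t), and hence D(P_{X^m} ‖ P_X^m) ≤ (q−1) log((n−1)/(n−m)) + O(q). -/

import Mathlib

open Finset


variable {q n : ℕ}

def TsetS (cnt : Fin q → ℕ) : Finset (Fin n → Fin q) :=
  Finset.univ.filter fun z => ∀ i, (Finset.univ.filter fun t => z t = i).card = cnt i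

def ExtS (cnt : Fin q → ℕ) (t : ℕ) (w : Fin n → Fin q) : Finset (Fin n → Fin q) :=
  (TsetS cnt).filter fun z => ∀ s : Fin n, (s : ℕ) < t → z s = w s

lemma mem_Tset_comp {cnt : Fin q → ℕ} (σ : Equiv.Perm (Fin n)) {z} (hz : z ∈ TsetS cnt) :
    z ∘ σ ∈ TsetS cnt := by
  simp only [TsetS, mem_filter, mem_univ, true_and] at hz ⊢
  intro i
  rw [← hz i]
  apply Finset.card_bij (fun t _ => σ t)
  · intro a ha; simp only [mem_filter, mem_univ, true_and] at ha ⊢; exact ha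
  · intro a _ b _ h; exact σ.injective h
  · intro b hb; refine ⟨σ.symm b, ?_, by simp⟩
    simp only [mem_filter, mem_univ, true_and, Function.comp] at hb ⊢
    simpa using hb

lemma Tset_card_comp (cnt : Fin q → ℕ) (σ : Equiv.Perm (Fin n))
    (P : (Fin n → Fin q) → Prop) [DecidablePred P] :
    ((TsetS cnt).filter fun z => P (z ∘ σ)).card = ((TsetS cnt).filter P).card := by
  refine Finset.card_bij' (fun z _ => z ∘ σ) (fun z _ => z ∘ σ.symm) ?_ ?_ ?_ ?_
  · intro z hz; simp only [mem_filter] at hz ⊢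
    exact ⟨mem_Tset_comp σ hz.1, hz.2⟩
  · intro z hz; simp only [mem_filter] at hz ⊢
    refine ⟨mem_Tset_comp σ.symm hz.1, ?_⟩
    have h : z ∘ σ.symm ∘ σ = z := by ext s; simp
    rw [Function.comp_assoc, h]; exact hz.2
  · intro z _; ext s; simp
  · intro z _; ext s; simp

lemma card_le_filter (t : ℕ) (ht : t < n) :
    (univ.filter fun s : Fin n => t ≤ (s:ℕ)).card = n - t := by
  have : (univ.filter fun s : Fin n => t ≤ (s:ℕ)) = Ici (⟨t, ht⟩ : Fin n) := by
    ext s; simp [Fin.le_def]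
  rw [this, Fin.card_Ici]

lemma card_lt_filter (t : ℕ) (ht : t < n) :
    (univ.filter fun s : Fin n => (s:ℕ) < t).card = t := by
  have : (univ.filter fun s : Fin n => (s:ℕ) < t) = Iio (⟨t, ht⟩ : Fin n) := by
    ext s; simp [Fin.lt_def]
  rw [this, Fin.card_Iio]

lemma ratio_key (cnt : Fin q → ℕ) {t : ℕ} (ht : t < n) (w : Fin n → Fin q) :
    (n - t) * (ExtS cnt (t+1) w).card
      + (univ.filter fun s : Fin n => (s:ℕ) < t ∧ w s = w ⟨t, ht⟩).card * (ExtS cnt t w).card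
    = cnt (w ⟨t, ht⟩) * (ExtS cnt t w).card := by
  set τ : Fin n := ⟨t, ht⟩ with hτ
  set i := w τ with hi
  set k := (univ.filter fun s : Fin n => (s:ℕ) < t ∧ w s = i).card with hk
  -- step 1 : per-z fiber split
  have step1 : ∀ z ∈ ExtS cnt t w,
      (univ.filter fun s : Fin n => t ≤ (s:ℕ) ∧ z s = i).card + k = cnt i := by
    intro z hz
    simp only [ExtS, TsetS, mem_filter, mem_univ, true_and] at hz
    obtain ⟨hzT, hzw⟩ := hz
    have hsplit : (univ.filter fun s : Fin n => z s = i)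
        = (univ.filter fun s : Fin n => t ≤ (s:ℕ) ∧ z s = i)
          ∪ (univ.filter fun s : Fin n => (s:ℕ) < t ∧ z s = i) := by
      ext s
      simp only [mem_filter, mem_univ, true_and, mem_union]
      constructor
      · intro h
        rcases le_or_gt t (s:ℕ) with h' | h'
        · exact Or.inl ⟨h', h⟩
        · exact Or.inr ⟨h', h⟩
      · rintro (⟨_, h⟩ | ⟨_, h⟩) <;> exact h
    have hdisj : Disjoint (univ.filter fun s : Fin n => t ≤ (s:ℕ) ∧ z s = i)
        (univ.filter fun s : Fin n => (s:ℕ) < t ∧ z s = i) := by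
      rw [Finset.disjoint_left]
      rintro s hs1 hs2
      simp only [mem_filter, mem_univ, true_and] at hs1 hs2
      omega
    have hcongr : (univ.filter fun s : Fin n => (s:ℕ) < t ∧ z s = i)
        = (univ.filter fun s : Fin n => (s:ℕ) < t ∧ w s = i) := by
      apply filter_congr
      intro s _
      constructor
      · rintro ⟨h1, h2⟩; exact ⟨h1, (hzw s h1) ▸ h2⟩
      · rintro ⟨h1, h2⟩; exact ⟨h1, (hzw s h1).symm ▸ h2⟩
    rw [← hzT i, hsplit, card_union_of_disjoint hdisj, hcongr]
  -- step 2 : bijection via swap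
  have step2 : ∑ z ∈ ExtS cnt t w, (univ.filter fun s : Fin n => t ≤ (s:ℕ) ∧ z s = i).card
      = (ExtS cnt (t+1) w).card * (n - t) := by
    rw [← Finset.card_sigma]
    have : (ExtS cnt (t+1) w).card * (n - t)
        = ((ExtS cnt (t+1) w).sigma fun _ => univ.filter fun s : Fin n => t ≤ (s:ℕ)).card := by
      rw [Finset.card_sigma]
      rw [Finset.sum_const_nat]
      intro z _
      exact card_le_filter t ht
    rw [this]
    refine Finset.card_bij' (fun a _ => (⟨a.1 ∘ Equiv.swap τ a.2, a.2⟩ :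
        Σ _ : Fin n → Fin q, Fin n)) (fun a _ => ⟨a.1 ∘ Equiv.swap τ a.2, a.2⟩) ?_ ?_ ?_ ?_
    · rintro ⟨z, s⟩ hzs
      rw [Finset.mem_sigma, mem_filter] at hzs
      obtain ⟨hz, -, hts, hzsi⟩ := hzs
      dsimp only at hz hts hzsi ⊢
      rw [Finset.mem_sigma]
      constructor
      · rw [ExtS, mem_filter] at hz ⊢
        refine ⟨mem_Tset_comp _ hz.1, ?_⟩
        intro s' hs'
        rcases Nat.lt_succ_iff_lt_or_eq.mp hs' with h | h
        · have h1 : s' ≠ τ := by intro e; rw [e] at h; simp only [hτ] at h; omega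
          have h2 : s' ≠ s := by intro e; rw [e] at h; omega
          simp only [Function.comp_apply, Equiv.swap_apply_of_ne_of_ne h1 h2]
          exact hz.2 s' h
        · have hsτ : s' = τ := Fin.ext h
          subst hsτ
          simp only [Function.comp_apply, Equiv.swap_apply_left]
          rw [hzsi, hi]
      · exact Finset.mem_filter.mpr ⟨mem_univ _, hts⟩
    · rintro ⟨z, s⟩ hzs
      rw [Finset.mem_sigma, mem_filter] at hzs
      obtain ⟨hz, -, hts⟩ := hzs
      dsimp only at hz hts ⊢
      rw [Finset.mem_sigma]
      rw [ExtS, mem_filter] at hz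
      constructor
      · rw [ExtS, mem_filter]
        refine ⟨mem_Tset_comp _ hz.1, ?_⟩
        intro s' hs'
        have h1 : s' ≠ τ := by intro e; rw [e] at hs'; simp only [hτ] at hs'; omega
        have h2 : s' ≠ s := by intro e; rw [e] at hs'; omega
        simp only [Function.comp_apply, Equiv.swap_apply_of_ne_of_ne h1 h2]
        exact hz.2 s' (Nat.lt_succ_of_lt hs')
      · refine Finset.mem_filter.mpr ⟨mem_univ _, hts, ?_⟩
        simp only [Function.comp_apply, Equiv.swap_apply_right]
        rw [hz.2 τ (by simp only [hτ]; omega), hi]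
    · rintro ⟨z, s⟩ _
      simp only [Sigma.mk.inj_iff, heq_eq_eq, and_true]
      ext s'
      simp [Equiv.swap_apply_self]
    · rintro ⟨z, s⟩ _
      simp only [Sigma.mk.inj_iff, heq_eq_eq, and_true]
      ext s'
      simp [Equiv.swap_apply_self]
  calc (n - t) * (ExtS cnt (t+1) w).card + k * (ExtS cnt t w).card
      = ∑ z ∈ ExtS cnt t w, (univ.filter fun s : Fin n => t ≤ (s:ℕ) ∧ z s = i).card
        + k * (ExtS cnt t w).card := by rw [step2]; ring
    _ = ∑ z ∈ ExtS cnt t w, ((univ.filter fun s : Fin n => t ≤ (s:ℕ) ∧ z s = i).card + k) := by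
        rw [Finset.sum_add_distrib, Finset.sum_const, smul_eq_mul]; ring
    _ = ∑ z ∈ ExtS cnt t w, cnt i := Finset.sum_congr rfl step1
    _ = cnt i * (ExtS cnt t w).card := by rw [Finset.sum_const, smul_eq_mul]; ring

lemma ExtS_zero (cnt : Fin q → ℕ) (w : Fin n → Fin q) : ExtS cnt 0 w = TsetS cnt := by
  rw [ExtS]
  apply Finset.filter_true_of_mem
  intro z _ s hs
  omega

lemma cnt_pos_of_mem {cnt : Fin q → ℕ} {z : Fin n → Fin q} (hz : z ∈ TsetS cnt) (a : Fin n) :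
    0 < cnt (z a) := by
  simp only [TsetS, mem_filter, mem_univ, true_and] at hz
  rw [← hz (z a)]
  exact Finset.card_pos.mpr ⟨a, by simp⟩

lemma k_lt_cnt {cnt : Fin q → ℕ} {z : Fin n → Fin q} (hz : z ∈ TsetS cnt) {t : ℕ} (ht : t < n) :
    (univ.filter fun s : Fin n => (s:ℕ) < t ∧ z s = z ⟨t, ht⟩).card < cnt (z ⟨t, ht⟩) := by
  simp only [TsetS, mem_filter, mem_univ, true_and] at hz
  rw [← hz (z ⟨t, ht⟩)]
  have hsub : insert (⟨t, ht⟩ : Fin n) (univ.filter fun s : Fin n => (s:ℕ) < t ∧ z s = z ⟨t, ht⟩)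
      ⊆ univ.filter fun s => z s = z ⟨t, ht⟩ := by
    intro s hs
    rcases Finset.mem_insert.mp hs with h | h
    · subst h; simp
    · simp only [mem_filter, mem_univ, true_and] at h ⊢; exact h.2
  have hni : (⟨t, ht⟩ : Fin n) ∉ (univ.filter fun s : Fin n => (s:ℕ) < t ∧ z s = z ⟨t, ht⟩) := by
    simp
  calc (univ.filter fun s : Fin n => (s:ℕ) < t ∧ z s = z ⟨t, ht⟩).card
      < (insert (⟨t, ht⟩ : Fin n) (univ.filter fun s : Fin n => (s:ℕ) < t ∧ z s = z ⟨t, ht⟩)).card := by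
        rw [Finset.card_insert_of_notMem hni]; omega
    _ ≤ _ := Finset.card_le_card hsub

lemma self_mem_ExtS {cnt : Fin q → ℕ} {z : Fin n → Fin q} (hz : z ∈ TsetS cnt) (t : ℕ) :
    z ∈ ExtS cnt t z := by
  rw [ExtS, mem_filter]
  exact ⟨hz, fun _ _ => rfl⟩

lemma ExtS_card_pos {cnt : Fin q → ℕ} {z : Fin n → Fin q} (hz : z ∈ TsetS cnt) (t : ℕ) :
    0 < (ExtS cnt t z).card :=
  Finset.card_pos.mpr ⟨z, self_mem_ExtS hz t⟩

lemma ratio_real {cnt : Fin q → ℕ} {z : Fin n → Fin q} (hz : z ∈ TsetS cnt) {t : ℕ} (ht : t < n) :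
    ((ExtS cnt (t+1) z).card : ℝ) / (ExtS cnt t z).card
      = ((cnt (z ⟨t, ht⟩) : ℝ)
          - (univ.filter fun s : Fin n => (s:ℕ) < t ∧ z s = z ⟨t, ht⟩).card) / ((n : ℝ) - t) := by
  have key := ratio_key cnt ht z
  have h1 : ((n : ℝ) - t) * (ExtS cnt (t+1) z).card
      = ((cnt (z ⟨t, ht⟩) : ℝ)
          - (univ.filter fun s : Fin n => (s:ℕ) < t ∧ z s = z ⟨t, ht⟩).card)
        * (ExtS cnt t z).card := by
    have := congrArg (fun x : ℕ => (x : ℝ)) key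
    push_cast [Nat.cast_sub ht.le] at this
    linarith [this]
  have hN : ((ExtS cnt t z).card : ℝ) ≠ 0 := by
    have := ExtS_card_pos hz t
    positivity
  have hnt : ((n : ℝ) - t) ≠ 0 := by
    have : (t : ℝ) < n := by exact_mod_cast ht
    linarith
  field_simp
  linarith [h1]

lemma single_count (cnt : Fin q → ℕ) (hn : 0 < n) (a : Fin n) (i : Fin q) :
    n * (((TsetS cnt : Finset (Fin n → Fin q))).filter fun z => z a = i).card
      = cnt i * (TsetS cnt : Finset (Fin n → Fin q)).card := by
  classical
  set w : Fin n → Fin q := fun _ => i with hw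
  have key := ratio_key cnt hn w
  have hk0 : (univ.filter fun s : Fin n => (s:ℕ) < 0 ∧ w s = w ⟨0, hn⟩) = ∅ := by
    ext s; simp
  have hE0 : ExtS cnt 0 w = TsetS cnt := ExtS_zero cnt w
  have hE1 : ExtS cnt 1 w = (TsetS cnt).filter fun z => z ⟨0, hn⟩ = i := by
    rw [ExtS]
    apply Finset.filter_congr
    intro z _
    constructor
    · intro h; exact h ⟨0, hn⟩ (by simp)
    · intro h s hs
      have hv : (s:ℕ) = 0 := by omega
      have : s = ⟨0, hn⟩ := Fin.ext hv
      rw [this]; exact h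
  rw [hk0, hE0, hE1] at key
  simp only [Finset.card_empty, zero_mul, add_zero, Nat.sub_zero, hw] at key
  rw [← key]
  congr 1
  have := Tset_card_comp cnt (Equiv.swap (⟨0, hn⟩ : Fin n) a) (fun z => z (⟨0, hn⟩ : Fin n) = i)
  rw [← this]
  apply congrArg
  apply Finset.filter_congr
  intro z _
  simp [Equiv.swap_apply_left]

lemma pair_count (cnt : Fin q → ℕ) (hn : 1 < n) (a b : Fin n) (hab : a ≠ b) (i : Fin q) :
    n * (n - 1) * ((TsetS cnt : Finset (Fin n → Fin q)).filter fun z => z a = i ∧ z b = i).card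
      + cnt i * (TsetS cnt : Finset (Fin n → Fin q)).card
    = cnt i * (cnt i * (TsetS cnt : Finset (Fin n → Fin q)).card) := by
  classical
  have hn0 : 0 < n := by omega
  set w : Fin n → Fin q := fun _ => i with hw
  set z0 : Fin n := ⟨0, hn0⟩ with hz0
  set z1 : Fin n := ⟨1, hn⟩ with hz1
  have key := ratio_key cnt hn w
  have hk1 : (univ.filter fun s : Fin n => (s:ℕ) < 1 ∧ w s = w ⟨1, hn⟩).card = 1 := by
    have : (univ.filter fun s : Fin n => (s:ℕ) < 1 ∧ w s = w ⟨1, hn⟩)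
        = (univ.filter fun s : Fin n => (s:ℕ) < 1) := by
      apply Finset.filter_congr; intro s _; simp [hw]
    rw [this, card_lt_filter 1 hn]
  have hE1 : ExtS cnt 1 w = (TsetS cnt).filter fun z => z z0 = i := by
    rw [ExtS]
    apply Finset.filter_congr
    intro z _
    constructor
    · intro h; exact h z0 (by simp [hz0])
    · intro h s hs
      have hv : (s:ℕ) = 0 := by omega
      have : s = z0 := Fin.ext hv
      rw [this]; exact h
  have hE2 : ExtS cnt 2 w = (TsetS cnt).filter fun z => z z0 = i ∧ z z1 = i := by
    rw [ExtS]
    apply Finset.filter_congr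
    intro z _
    constructor
    · intro h; exact ⟨h z0 (by simp [hz0]), h z1 (by simp [hz1])⟩
    · rintro ⟨h0, h1⟩ s hs
      have hv : (s:ℕ) = 0 ∨ (s:ℕ) = 1 := by omega
      rcases hv with h | h
      · have : s = z0 := Fin.ext h
        rw [this]; exact h0
      · have : s = z1 := Fin.ext h
        rw [this]; exact h1
  rw [hk1, hE1, hE2] at key
  simp only [hw, one_mul] at key
  -- key : (n-1) * card E2' + card E1' = cnt i * card E1'
  have hsingle := single_count cnt hn0 z0 i
  -- n * card E1' = cnt i * Tc
  -- combine : n*(n-1)*card E2' + cnt i * Tc = cnt i * (cnt i * Tc)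
  have hcomb : n * (n - 1) * ((TsetS cnt : Finset (Fin n → Fin q)).filter
        fun z => z z0 = i ∧ z z1 = i).card
      + cnt i * (TsetS cnt : Finset (Fin n → Fin q)).card
      = cnt i * (cnt i * (TsetS cnt : Finset (Fin n → Fin q)).card) := by
    calc n * (n - 1) * ((TsetS cnt).filter fun z => z z0 = i ∧ z z1 = i).card
          + cnt i * (TsetS cnt).card
        = n * (n - 1) * ((TsetS cnt).filter fun z => z z0 = i ∧ z z1 = i).card
          + n * ((TsetS cnt).filter fun z => z z0 = i).card := by rw [hsingle]
      _ = n * ((n - 1) * ((TsetS cnt).filter fun z => z z0 = i ∧ z z1 = i).card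
          + ((TsetS cnt).filter fun z => z z0 = i).card) := by ring
      _ = n * (cnt i * ((TsetS cnt).filter fun z => z z0 = i).card) := by rw [key]
      _ = cnt i * (n * ((TsetS cnt).filter fun z => z z0 = i).card) := by ring
      _ = cnt i * (cnt i * (TsetS cnt).card) := by rw [hsingle]
  rw [← hcomb]
  congr 2
  -- transport the pair (z0,z1) to (a,b) by a permutation
  have hb' : Equiv.swap z0 a b ≠ z0 := by
    intro e
    have h := congrArg (Equiv.swap z0 a) e
    rw [Equiv.swap_apply_self, Equiv.swap_apply_left] at h
    exact hab h.symm
  set σ : Equiv.Perm (Fin n) := (Equiv.swap z1 (Equiv.swap z0 a b)).trans (Equiv.swap z0 a) with hσ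
  have hσ0 : σ z0 = a := by
    have h01 : z0 ≠ z1 := by simp [hz0, hz1, Fin.ext_iff]
    rw [hσ]
    simp only [Equiv.trans_apply]
    rw [Equiv.swap_apply_of_ne_of_ne h01 (Ne.symm hb'), Equiv.swap_apply_left]
  have hσ1 : σ z1 = b := by
    rw [hσ]
    simp only [Equiv.trans_apply]
    rw [Equiv.swap_apply_left, Equiv.swap_apply_self]
  have := Tset_card_comp cnt σ (fun z => z z0 = i ∧ z z1 = i)
  rw [← this]
  apply congrArg
  apply Finset.filter_congr
  intro z _
  simp only [Function.comp_apply, hσ0, hσ1]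

section PerT
variable {q n : ℕ}

lemma inner_ge (cnt : Fin q → ℕ) (hsum : ∑ i, cnt i = n) (hn2 : 1 < n)
    (hTc : 0 < (TsetS cnt : Finset (Fin n → Fin q)).card)
    (s τ : Fin n) (hsτ : s ≠ τ) :
    ((n:ℝ) - q) * (TsetS cnt : Finset (Fin n → Fin q)).card / ((n:ℝ) * ((n:ℝ)-1))
      ≤ ∑ z ∈ (TsetS cnt : Finset (Fin n → Fin q)),
          (if z s = z τ then (1/(cnt (z τ)):ℝ) else 0) := by
  classical
  set T := (TsetS cnt : Finset (Fin n → Fin q)) with hT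
  have hn0 : (0:ℝ) < n := by positivity
  have hn1 : (0:ℝ) < (n:ℝ) - 1 := by
    have : (1:ℝ) < n := by exact_mod_cast hn2
    linarith
  have hTcR : (0:ℝ) < T.card := by exact_mod_cast hTc
  -- rewrite the sum as a sum over colors
  have hrw : ∑ z ∈ T, (if z s = z τ then (1/(cnt (z τ)):ℝ) else 0)
      = ∑ i : Fin q, (1/(cnt i):ℝ) * ((T.filter fun z => z s = i ∧ z τ = i).card : ℝ) := by
    have h1 : ∀ z ∈ T, (if z s = z τ then (1/(cnt (z τ)):ℝ) else 0)
        = ∑ i : Fin q, (if z τ = i then (if z s = i then (1/(cnt i):ℝ) else 0) else 0) := by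
      intro z _
      rw [Finset.sum_ite_eq univ (z τ) (fun i => (if z s = i then (1/(cnt i):ℝ) else 0))]
      simp
    rw [Finset.sum_congr rfl h1, Finset.sum_comm]
    apply Finset.sum_congr rfl
    intro i _
    have h2 : ∀ z ∈ T, (if z τ = i then (if z s = i then (1/(cnt i):ℝ) else 0) else 0)
        = (if z s = i ∧ z τ = i then (1/(cnt i):ℝ) else 0) := by
      intro z _
      by_cases hτi : z τ = i <;> by_cases hsi : z s = i <;> simp [hτi, hsi]
    rw [Finset.sum_congr rfl h2, ← Finset.sum_filter, Finset.sum_const, nsmul_eq_mul]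
    ring
  rw [hrw]
  -- lower bound each color term
  have hterm : ∀ i : Fin q, ((cnt i:ℝ) - 1) * T.card / ((n:ℝ) * ((n:ℝ)-1))
      ≤ (1/(cnt i):ℝ) * ((T.filter fun z => z s = i ∧ z τ = i).card : ℝ) := by
    intro i
    by_cases hci : cnt i = 0
    · have hcard : (T.filter fun z => z s = i ∧ z τ = i).card = 0 := by
        rw [Finset.card_eq_zero, Finset.filter_eq_empty_iff]
        rintro z hz ⟨h1, h2⟩
        have := cnt_pos_of_mem hz τ
        rw [h2, hci] at this
        omega
      rw [hcard, hci]
      simp only [Nat.cast_zero, mul_zero]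
      have : ((0:ℝ) - 1) * T.card / ((n:ℝ) * ((n:ℝ)-1)) < 0 := by
        apply div_neg_of_neg_of_pos
        · nlinarith
        · positivity
      linarith
    · have hciR : (0:ℝ) < (cnt i : ℝ) := by
        have : 0 < cnt i := Nat.pos_of_ne_zero hci
        exact_mod_cast this
      have hp := pair_count cnt hn2 s τ hsτ i
      have hpR : (n:ℝ) * ((n:ℝ)-1) * ((T.filter fun z => z s = i ∧ z τ = i).card : ℝ)
          + (cnt i : ℝ) * T.card = (cnt i : ℝ) * ((cnt i : ℝ) * T.card) := by
        have := congrArg (fun x : ℕ => (x : ℝ)) hp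
        push_cast [Nat.cast_sub hn2.le] at this
        convert this using 2 <;> ring
      have : (1/(cnt i):ℝ) * ((T.filter fun z => z s = i ∧ z τ = i).card : ℝ)
          = ((cnt i:ℝ) - 1) * T.card / ((n:ℝ) * ((n:ℝ)-1)) := by
        have hne1 : (cnt i : ℝ) ≠ 0 := ne_of_gt hciR
        have hne2 : (n:ℝ) ≠ 0 := ne_of_gt hn0
        have hne3 : (n:ℝ) - 1 ≠ 0 := ne_of_gt hn1
        field_simp
        linear_combination hpR
      rw [this]
  calc ((n:ℝ) - q) * T.card / ((n:ℝ) * ((n:ℝ)-1))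
      = ∑ i : Fin q, ((cnt i:ℝ) - 1) * T.card / ((n:ℝ) * ((n:ℝ)-1)) := by
        rw [← Finset.sum_div, ← Finset.sum_mul]
        congr 2
        have : ∑ i : Fin q, ((cnt i:ℝ) - 1) = (∑ i, (cnt i : ℝ)) - q := by
          rw [Finset.sum_sub_distrib]
          simp
        rw [this]
        have : (∑ i, (cnt i : ℝ)) = (n:ℝ) := by exact_mod_cast congrArg (fun x : ℕ => (x:ℝ)) hsum
        rw [this]
    _ ≤ _ := Finset.sum_le_sum (fun i _ => hterm i)

end PerT

lemma harm (n : ℕ) : ∀ m : ℕ, 1 ≤ m → m < n →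
    ∑ t ∈ Finset.Ico 1 m, (1:ℝ)/((n:ℝ)-t) ≤ Real.log ((n:ℝ)-1) - Real.log ((n:ℝ)-m) := by
  intro m
  induction m with
  | zero => intro h; omega
  | succ m ih =>
    intro _ hmn
    by_cases hm : m = 0
    · subst hm
      simp
    · have hm1 : 1 ≤ m := Nat.one_le_iff_ne_zero.mpr hm
      have hmn' : m < n := by omega
      have hrec := ih hm1 hmn'
      rw [Finset.sum_Ico_succ_top hm1]
      have hstep : (1:ℝ)/((n:ℝ)-m) ≤ Real.log ((n:ℝ)-m) - Real.log ((n:ℝ)-(m+1)) := by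
        have ha : (2:ℝ) ≤ (n:ℝ) - m := by
          have : (m:ℝ) + 2 ≤ n := by exact_mod_cast hmn
          linarith
        have hb : (0:ℝ) < (n:ℝ) - (m+1) := by push_cast; linarith
        have hba : ((n:ℝ)-(m+1)) / ((n:ℝ)-m) > 0 := by positivity
        have h1 := Real.log_le_sub_one_of_pos hba
        rw [Real.log_div (ne_of_gt hb) (by linarith)] at h1
        have h2 : ((n:ℝ)-(m+1)) / ((n:ℝ)-m) - 1 = -(1/((n:ℝ)-m)) := by
          field_simp
          ring
        rw [h2] at h1
        linarith
    -- combine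
      push_cast
      push_cast at hrec hstep
      linarith

lemma bound_two (qn nn mn : ℕ) (hq : 0 < qn) (hmn : mn < nn) :
    ((qn:ℝ)-1)/((nn:ℝ)-1) * ∑ t ∈ Finset.range mn, (t:ℝ)/((nn:ℝ)-t)
    ≤ ((qn:ℝ)-1) * Real.log (((nn:ℝ)-1)/((nn:ℝ)-mn)) + 2*qn := by
  have hq1 : (1:ℝ) ≤ qn := by exact_mod_cast hq
  by_cases hm : mn = 0
  · subst hm
    simp only [Finset.range_zero, Finset.sum_empty, mul_zero, Nat.cast_zero, sub_zero]
    by_cases hn1 : nn = 1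
    · subst hn1
      norm_num
    · have hn2 : 2 ≤ nn := by omega
      have hn2R : (2:ℝ) ≤ nn := by exact_mod_cast hn2
      have hpos : (0:ℝ) < ((nn:ℝ)-1)/(nn:ℝ) := by
        apply div_pos <;> linarith
      have hhalf : (1:ℝ)/2 ≤ ((nn:ℝ)-1)/(nn:ℝ) := by
        rw [div_le_div_iff₀ (by norm_num) (by linarith)]
        linarith
      have hlog : Real.log (1/2) ≤ Real.log (((nn:ℝ)-1)/(nn:ℝ)) :=
        Real.log_le_log (by norm_num) hhalf
      have hlog2 : Real.log (1/2) = -Real.log 2 := by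
        rw [one_div, Real.log_inv]
      have hl2 : Real.log 2 ≤ 1 := by
        have := Real.log_le_sub_one_of_pos (by norm_num : (0:ℝ) < 2)
        linarith
      nlinarith [hlog, hlog2, hl2]
  · have hm1 : 1 ≤ mn := Nat.one_le_iff_ne_zero.mpr hm
    have hn2 : 2 ≤ nn := by omega
    have hn1R : (0:ℝ) < (nn:ℝ) - 1 := by
      have : (2:ℝ) ≤ nn := by exact_mod_cast hn2
      linarith
    have hnm : (0:ℝ) < (nn:ℝ) - mn := by
      have : (mn:ℝ) < nn := by exact_mod_cast hmn
      linarith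
    -- termwise : t/(n-t) ≤ (n-1) * (1/(n-t))
    have hterm : ∀ t ∈ Finset.range mn, (t:ℝ)/((nn:ℝ)-t) ≤ ((nn:ℝ)-1) * ((1:ℝ)/((nn:ℝ)-t)) := by
      intro t ht
      rw [Finset.mem_range] at ht
      have htn : t < nn := lt_trans ht hmn
      have h1 : (0:ℝ) < (nn:ℝ) - t := by
        have : (t:ℝ) < nn := by exact_mod_cast htn
        linarith
      rw [mul_one_div, div_le_div_iff₀ h1 h1]
      have : (t:ℝ) ≤ (nn:ℝ) - 1 := by
        have : (t:ℝ) + 1 ≤ nn := by exact_mod_cast htn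
        linarith
      nlinarith
    have hs1 : ∑ t ∈ Finset.range mn, (t:ℝ)/((nn:ℝ)-t)
        ≤ ((nn:ℝ)-1) * ∑ t ∈ Finset.range mn, (1:ℝ)/((nn:ℝ)-t) := by
      rw [Finset.mul_sum]
      exact Finset.sum_le_sum hterm
    -- split off t = 0
    have hsplit : ∑ t ∈ Finset.range mn, (1:ℝ)/((nn:ℝ)-t)
        = 1/(nn:ℝ) + ∑ t ∈ Finset.Ico 1 mn, (1:ℝ)/((nn:ℝ)-t) := by
      rw [Finset.range_eq_Ico, Finset.sum_eq_sum_Ico_succ_bot hm1]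
      norm_num
    have hharm := harm nn mn hm1 hmn
    have hlogdiv : Real.log (((nn:ℝ)-1)/((nn:ℝ)-mn))
        = Real.log ((nn:ℝ)-1) - Real.log ((nn:ℝ)-mn) :=
      Real.log_div (ne_of_gt hn1R) (ne_of_gt hnm)
    have hnn0 : (0:ℝ) < nn := by positivity
    -- assemble
    have hq0 : (0:ℝ) ≤ (qn:ℝ) - 1 := by linarith
    have hLHS : ((qn:ℝ)-1)/((nn:ℝ)-1) * ∑ t ∈ Finset.range mn, (t:ℝ)/((nn:ℝ)-t)
        ≤ ((qn:ℝ)-1) * ∑ t ∈ Finset.range mn, (1:ℝ)/((nn:ℝ)-t) := by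
      have h2 : ((qn:ℝ)-1)/((nn:ℝ)-1) * ∑ t ∈ Finset.range mn, (t:ℝ)/((nn:ℝ)-t)
          ≤ ((qn:ℝ)-1)/((nn:ℝ)-1) * (((nn:ℝ)-1) * ∑ t ∈ Finset.range mn, (1:ℝ)/((nn:ℝ)-t)) := by
        apply mul_le_mul_of_nonneg_left hs1
        positivity
      calc ((qn:ℝ)-1)/((nn:ℝ)-1) * ∑ t ∈ Finset.range mn, (t:ℝ)/((nn:ℝ)-t)
          ≤ ((qn:ℝ)-1)/((nn:ℝ)-1) * (((nn:ℝ)-1) * ∑ t ∈ Finset.range mn, (1:ℝ)/((nn:ℝ)-t)) := h2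
        _ = ((qn:ℝ)-1) * ∑ t ∈ Finset.range mn, (1:ℝ)/((nn:ℝ)-t) := by
            field_simp
    have hfin : ((qn:ℝ)-1) * ∑ t ∈ Finset.range mn, (1:ℝ)/((nn:ℝ)-t)
        ≤ ((qn:ℝ)-1) * Real.log (((nn:ℝ)-1)/((nn:ℝ)-mn)) + 2*qn := by
      rw [hsplit, hlogdiv]
      have h3 : ((qn:ℝ)-1) * (1/(nn:ℝ)) ≤ 2*qn := by
        have h4 : (1:ℝ)/(nn:ℝ) ≤ 1 := by
          rw [div_le_one hnn0]
          exact_mod_cast Nat.one_le_iff_ne_zero.mpr (by omega)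
        nlinarith
      have h5 : ((qn:ℝ)-1) * ∑ t ∈ Finset.Ico 1 mn, (1:ℝ)/((nn:ℝ)-t)
          ≤ ((qn:ℝ)-1) * (Real.log ((nn:ℝ)-1) - Real.log ((nn:ℝ)-mn)) :=
        mul_le_mul_of_nonneg_left hharm hq0
      nlinarith [h5, h3]
    linarith [hLHS, hfin]

section PerT2
variable {q n : ℕ}

lemma K_ge (cnt : Fin q → ℕ) (hsum : ∑ i, cnt i = n) (hn2 : 1 < n)
    (hTc : 0 < (TsetS cnt : Finset (Fin n → Fin q)).card)
    {tv : ℕ} (htn : tv < n) :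
    (tv : ℝ) * (((n:ℝ) - q) * (TsetS cnt : Finset (Fin n → Fin q)).card / ((n:ℝ) * ((n:ℝ)-1)))
      ≤ ∑ z ∈ (TsetS cnt : Finset (Fin n → Fin q)),
          (((univ.filter fun s : Fin n => (s:ℕ) < tv ∧ z s = z ⟨tv, htn⟩).card : ℝ)
            / (cnt (z ⟨tv, htn⟩) : ℝ)) := by
  classical
  set T := (TsetS cnt : Finset (Fin n → Fin q)) with hT
  set τ : Fin n := ⟨tv, htn⟩ with hτ
  -- rewrite K as a sum over positions
  have hrw : ∑ z ∈ T, (((univ.filter fun s : Fin n => (s:ℕ) < tv ∧ z s = z τ).card : ℝ)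
        / (cnt (z τ) : ℝ))
      = ∑ s ∈ (univ.filter fun s : Fin n => (s:ℕ) < tv),
          ∑ z ∈ T, (if z s = z τ then (1/(cnt (z τ)):ℝ) else 0) := by
    have h1 : ∀ z ∈ T, (((univ.filter fun s : Fin n => (s:ℕ) < tv ∧ z s = z τ).card : ℝ)
          / (cnt (z τ) : ℝ))
        = ∑ s : Fin n, (if (s:ℕ) < tv then (if z s = z τ then (1/(cnt (z τ)):ℝ) else 0) else 0) := by
      intro z _
      rw [Finset.card_filter]
      push_cast
      rw [Finset.sum_div]
      apply Finset.sum_congr rfl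
      intro s _
      by_cases h1 : (s:ℕ) < tv <;> by_cases h2 : z s = z τ <;> simp [h1, h2]
    rw [Finset.sum_congr rfl h1, Finset.sum_comm]
    have h2 : ∀ y : Fin n, (∑ x ∈ T, if (y:ℕ) < tv then (if x y = x τ then (1/(cnt (x τ)):ℝ) else 0) else 0)
        = (if (y:ℕ) < tv then ∑ x ∈ T, (if x y = x τ then (1/(cnt (x τ)):ℝ) else 0) else 0) := by
      intro y
      by_cases h : (y:ℕ) < tv
      · simp only [if_pos h]
      · simp only [if_neg h, Finset.sum_const_zero]
    rw [Finset.sum_congr rfl (fun y _ => h2 y), ← Finset.sum_filter]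
  rw [hrw]
  have hcard : (univ.filter fun s : Fin n => (s:ℕ) < tv).card = tv := card_lt_filter tv htn
  have hbound : ∀ s ∈ (univ.filter fun s : Fin n => (s:ℕ) < tv),
      ((n:ℝ) - q) * T.card / ((n:ℝ) * ((n:ℝ)-1))
        ≤ ∑ z ∈ T, (if z s = z τ then (1/(cnt (z τ)):ℝ) else 0) := by
    intro s hs
    simp only [mem_filter, mem_univ, true_and] at hs
    have hsτ : s ≠ τ := by
      intro e
      rw [e, hτ] at hs
      simp at hs
    exact inner_ge cnt hsum hn2 hTc s τ hsτ
  calc (tv : ℝ) * (((n:ℝ) - q) * T.card / ((n:ℝ) * ((n:ℝ)-1)))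
      = (univ.filter fun s : Fin n => (s:ℕ) < tv).card
          • (((n:ℝ) - q) * T.card / ((n:ℝ) * ((n:ℝ)-1))) := by
        rw [hcard, nsmul_eq_mul]
    _ ≤ _ := Finset.card_nsmul_le_sum _ _ _ hbound

lemma per_t (cnt : Fin q → ℕ) (hsum : ∑ i, cnt i = n) (hn2 : 1 < n)
    (hTc : 0 < (TsetS cnt : Finset (Fin n → Fin q)).card)
    {tv : ℕ} (htn : tv < n) :
    ((TsetS cnt : Finset (Fin n → Fin q)).card : ℝ)⁻¹
      * ∑ z ∈ (TsetS cnt : Finset (Fin n → Fin q)),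
        (Real.log ((ExtS cnt (tv+1) z).card : ℝ) - Real.log ((ExtS cnt tv z).card : ℝ)
          - Real.log ((cnt (z ⟨tv, htn⟩) : ℝ) / n))
    ≤ ((q:ℝ)-1)/((n:ℝ)-1) * ((tv:ℝ)/((n:ℝ)-tv)) := by
  classical
  set T := (TsetS cnt : Finset (Fin n → Fin q)) with hT
  set τ : Fin n := ⟨tv, htn⟩ with hτ
  have hn0 : (0:ℝ) < n := by positivity
  have hn1 : (0:ℝ) < (n:ℝ) - 1 := by
    have : (1:ℝ) < n := by exact_mod_cast hn2
    linarith
  have hnt : (0:ℝ) < (n:ℝ) - tv := by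
    have : (tv:ℝ) < n := by exact_mod_cast htn
    linarith
  have hTcR : (0:ℝ) < T.card := by exact_mod_cast hTc
  -- pointwise bound
  have hpt : ∀ z ∈ T,
      Real.log ((ExtS cnt (tv+1) z).card : ℝ) - Real.log ((ExtS cnt tv z).card : ℝ)
          - Real.log ((cnt (z τ) : ℝ) / n)
      ≤ ((n:ℝ)/((n:ℝ)-tv)) * (1 - ((univ.filter fun s : Fin n => (s:ℕ) < tv ∧ z s = z τ).card : ℝ)
          / (cnt (z τ) : ℝ)) - 1 := by
    intro z hz
    have hc : 0 < cnt (z τ) := cnt_pos_of_mem hz τ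
    have hcR : (0:ℝ) < (cnt (z τ) : ℝ) := by exact_mod_cast hc
    have hk : (univ.filter fun s : Fin n => (s:ℕ) < tv ∧ z s = z τ).card < cnt (z τ) :=
      k_lt_cnt hz htn
    set k : ℕ := (univ.filter fun s : Fin n => (s:ℕ) < tv ∧ z s = z τ).card with hkdef
    have hkR : (k:ℝ) < (cnt (z τ) : ℝ) := by exact_mod_cast hk
    have hXpos : (0:ℝ) < ((cnt (z τ) : ℝ) - k) / ((n:ℝ) - tv) := by
      apply div_pos <;> linarith
    have hN1 : (0:ℝ) < ((ExtS cnt (tv+1) z).card : ℝ) := by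
      have := ExtS_card_pos hz (tv+1); exact_mod_cast this
    have hN0 : (0:ℝ) < ((ExtS cnt tv z).card : ℝ) := by
      have := ExtS_card_pos hz tv; exact_mod_cast this
    have hlog1 : Real.log ((ExtS cnt (tv+1) z).card : ℝ) - Real.log ((ExtS cnt tv z).card : ℝ)
        = Real.log (((cnt (z τ) : ℝ) - k) / ((n:ℝ) - tv)) := by
      rw [← Real.log_div (ne_of_gt hN1) (ne_of_gt hN0), ratio_real hz htn]
    rw [hlog1, ← Real.log_div (ne_of_gt hXpos) (ne_of_gt (div_pos hcR hn0))]
    have hYpos : (0:ℝ) < ((cnt (z τ) : ℝ) - k) / ((n:ℝ) - tv) / ((cnt (z τ) : ℝ) / n) :=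
      div_pos hXpos (div_pos hcR hn0)
    have hle := Real.log_le_sub_one_of_pos hYpos
    have heq : ((cnt (z τ) : ℝ) - k) / ((n:ℝ) - tv) / ((cnt (z τ) : ℝ) / n)
        = ((n:ℝ)/((n:ℝ)-tv)) * (1 - (k:ℝ) / (cnt (z τ) : ℝ)) := by
      field_simp
    rw [heq]
    exact Real.log_le_sub_one_of_pos (heq ▸ hYpos)
  -- sum the pointwise bound
  have hsum_le : ∑ z ∈ T, (Real.log ((ExtS cnt (tv+1) z).card : ℝ)
        - Real.log ((ExtS cnt tv z).card : ℝ) - Real.log ((cnt (z τ) : ℝ) / n))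
      ≤ ((n:ℝ)/((n:ℝ)-tv)) * ((T.card : ℝ)
          - ∑ z ∈ T, (((univ.filter fun s : Fin n => (s:ℕ) < tv ∧ z s = z τ).card : ℝ)
              / (cnt (z τ) : ℝ))) - T.card := by
    calc ∑ z ∈ T, (Real.log ((ExtS cnt (tv+1) z).card : ℝ)
          - Real.log ((ExtS cnt tv z).card : ℝ) - Real.log ((cnt (z τ) : ℝ) / n))
        ≤ ∑ z ∈ T, (((n:ℝ)/((n:ℝ)-tv))
            * (1 - ((univ.filter fun s : Fin n => (s:ℕ) < tv ∧ z s = z τ).card : ℝ)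
              / (cnt (z τ) : ℝ)) - 1) := Finset.sum_le_sum hpt
      _ = _ := by
          rw [Finset.sum_sub_distrib, ← Finset.mul_sum, Finset.sum_sub_distrib]
          simp only [Finset.sum_const, nsmul_eq_mul, mul_one]
  -- plug in the K bound
  have hK := K_ge cnt hsum hn2 hTc htn
  have hmono : ((n:ℝ)/((n:ℝ)-tv)) * ((T.card : ℝ)
        - ∑ z ∈ T, (((univ.filter fun s : Fin n => (s:ℕ) < tv ∧ z s = z τ).card : ℝ)
            / (cnt (z τ) : ℝ))) - T.card
      ≤ ((n:ℝ)/((n:ℝ)-tv)) * ((T.card : ℝ)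
          - (tv : ℝ) * (((n:ℝ) - q) * T.card / ((n:ℝ) * ((n:ℝ)-1)))) - T.card := by
    have hpos : (0:ℝ) < (n:ℝ)/((n:ℝ)-tv) := div_pos hn0 hnt
    have := hK
    nlinarith [this, hpos]
  have hfinal : ((n:ℝ)/((n:ℝ)-tv)) * ((T.card : ℝ)
        - (tv : ℝ) * (((n:ℝ) - q) * T.card / ((n:ℝ) * ((n:ℝ)-1)))) - T.card
      = T.card * (((q:ℝ)-1)/((n:ℝ)-1) * ((tv:ℝ)/((n:ℝ)-tv))) := by
    field_simp
    ring
  calc (T.card : ℝ)⁻¹ * ∑ z ∈ T, (Real.log ((ExtS cnt (tv+1) z).card : ℝ)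
        - Real.log ((ExtS cnt tv z).card : ℝ) - Real.log ((cnt (z τ) : ℝ) / n))
      ≤ (T.card : ℝ)⁻¹ * (T.card * (((q:ℝ)-1)/((n:ℝ)-1) * ((tv:ℝ)/((n:ℝ)-tv)))) := by
        apply mul_le_mul_of_nonneg_left _ (le_of_lt (inv_pos.mpr hTcR))
        rw [← hfinal]
        exact le_trans hsum_le hmono
    _ = ((q:ℝ)-1)/((n:ℝ)-1) * ((tv:ℝ)/((n:ℝ)-tv)) := by
        field_simp

end PerT2

lemma stam_main (q n m : ℕ) (hq : 0 < q) (hmn : m < n) (cnt : Fin q → ℕ)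
    (hsum : ∑ i, cnt i = n) :
    ∑ x : Fin m → Fin q,
      ((((TsetS cnt : Finset (Fin n → Fin q)).filter
            fun z => ∀ t : Fin m, z (Fin.castLE hmn.le t) = x t).card : ℝ)
        / ((TsetS cnt : Finset (Fin n → Fin q)).card : ℝ))
      * Real.log (((((TsetS cnt : Finset (Fin n → Fin q)).filter
            fun z => ∀ t : Fin m, z (Fin.castLE hmn.le t) = x t).card : ℝ)
          / ((TsetS cnt : Finset (Fin n → Fin q)).card : ℝ)) / ∏ t, ((cnt (x t) : ℝ) / n))
    ≤ ((q:ℝ)-1)/((n:ℝ)-1) * ∑ t ∈ Finset.range m, (t:ℝ)/((n:ℝ)-t) := by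
  classical
  set T := (TsetS cnt : Finset (Fin n → Fin q)) with hT
  have hRHS0 : 0 ≤ ((q:ℝ)-1)/((n:ℝ)-1) * ∑ t ∈ Finset.range m, (t:ℝ)/((n:ℝ)-t) := by
    apply mul_nonneg
    · apply div_nonneg
      · have : (1:ℝ) ≤ q := by exact_mod_cast hq
        linarith
      · have : (1:ℝ) ≤ n := by exact_mod_cast (by omega : 1 ≤ n)
        linarith
    · apply Finset.sum_nonneg
      intro t ht
      rw [Finset.mem_range] at ht
      apply div_nonneg (by positivity)
      have : (t:ℝ) < n := by exact_mod_cast lt_trans ht hmn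
      linarith
  by_cases hTc : T.card = 0
  · simp only [hTc, Nat.cast_zero, div_zero, zero_mul, zero_div]
    rw [Finset.sum_const_zero]
    exact hRHS0
  have hTcpos : 0 < T.card := Nat.pos_of_ne_zero hTc
  have hTcR : (0:ℝ) < (T.card : ℝ) := by exact_mod_cast hTcpos
  set resf : (Fin n → Fin q) → (Fin m → Fin q) :=
    fun z t => z (Fin.castLE hmn.le t) with hresf
  set F : (Fin n → Fin q) → ℝ := fun z =>
    Real.log ((((T.filter fun z' => resf z' = resf z).card : ℝ) / (T.card : ℝ))
      / ∏ t, ((cnt (resf z t) : ℝ) / n)) with hF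
  set Dterm : (Fin m → Fin q) → ℝ := fun x =>
    (((T.filter fun z => ∀ t : Fin m, z (Fin.castLE hmn.le t) = x t).card : ℝ)
        / ((T.card : ℝ)))
      * Real.log ((((T.filter fun z => ∀ t : Fin m, z (Fin.castLE hmn.le t) = x t).card : ℝ)
          / ((T.card : ℝ))) / ∏ t, ((cnt (x t) : ℝ) / n)) with hDterm
  -- the match-set predicate equals the fiber predicate
  have hMx : ∀ x : Fin m → Fin q,
      (T.filter fun z => ∀ t : Fin m, z (Fin.castLE hmn.le t) = x t)
        = T.filter (fun z => resf z = x) := by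
    intro x
    apply Finset.filter_congr
    intro z _
    rw [funext_iff]
  -- Step I : regroup the sum over x as a sum over z in T
  have hregroup : ∑ x : Fin m → Fin q, Dterm x = ((T.card : ℝ))⁻¹ * ∑ z ∈ T, F z := by
    have h1 : ∀ x : Fin m → Fin q,
        Dterm x = ((T.card : ℝ))⁻¹ * ∑ z ∈ T.filter (fun z => resf z = x), F z := by
      intro x
      rw [hDterm]
      simp only []
      rw [hMx x]
      have h2 : ∀ z ∈ T.filter (fun z => resf z = x), F z
          = Real.log ((((T.filter fun z' => resf z' = x).card : ℝ) / (T.card : ℝ))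
            / ∏ t, ((cnt (x t) : ℝ) / n)) := by
        intro z hz
        rw [Finset.mem_filter] at hz
        rw [hF]
        simp only [hz.2]
      rw [Finset.sum_congr rfl h2, Finset.sum_const, nsmul_eq_mul]
      ring
    rw [Finset.sum_congr rfl (fun x _ => h1 x), ← Finset.mul_sum]
    congr 1
    exact Finset.sum_fiberwise_of_maps_to (fun z _ => Finset.mem_univ (resf z)) F
  rw [hregroup]
  -- Step II : per-z telescoping
  have hstep2 : ∀ z ∈ T, F z = ∑ t : Fin m,
      (Real.log ((ExtS cnt ((t:ℕ)+1) z).card : ℝ) - Real.log ((ExtS cnt (t:ℕ) z).card : ℝ)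
        - Real.log ((cnt (z (Fin.castLE hmn.le t)) : ℝ) / n)) := by
    intro z hz
    have hzT : z ∈ TsetS cnt := hz
    have hfiber : (T.filter fun z' => resf z' = resf z) = ExtS cnt m z := by
      rw [ExtS]
      apply Finset.filter_congr
      intro z' _
      constructor
      · intro h s hs
        have := congrFun h ⟨s.val, hs⟩
        simpa [hresf, Fin.castLE] using this
      · intro h
        funext t
        exact h (Fin.castLE hmn.le t) t.isLt
    rw [hF]
    simp only [hfiber]
    have hNpos : ∀ t : ℕ, (0:ℝ) < ((ExtS cnt t z).card : ℝ) := by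
      intro t
      have := ExtS_card_pos hzT t
      exact_mod_cast this
    have hppos : ∀ t : Fin m, (0:ℝ) < (cnt (resf z t) : ℝ) / n := by
      intro t
      have h1 : 0 < cnt (z (Fin.castLE hmn.le t)) := cnt_pos_of_mem hzT _
      have h2 : (0:ℝ) < n := by exact_mod_cast (show 0 < n by omega)
      apply div_pos _ h2
      exact_mod_cast h1
    have hprodpos : (0:ℝ) < ∏ t : Fin m, ((cnt (resf z t) : ℝ) / n) :=
      Finset.prod_pos (fun t _ => hppos t)
    rw [Real.log_div (ne_of_gt (div_pos (hNpos m) hTcR)) (ne_of_gt hprodpos),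
        Real.log_div (ne_of_gt (hNpos m)) (ne_of_gt hTcR),
        Real.log_prod (fun t _ => ne_of_gt (hppos t))]
    have htel : Real.log ((ExtS cnt m z).card : ℝ) - Real.log ((T.card : ℝ))
        = ∑ i ∈ Finset.range m,
          (Real.log ((ExtS cnt (i+1) z).card : ℝ) - Real.log ((ExtS cnt i z).card : ℝ)) := by
      rw [Finset.sum_range_sub (fun i => Real.log ((ExtS cnt i z).card : ℝ)) m]
      congr 2
      rw [hT, ← ExtS_zero cnt z]
    have hconv : ∑ i ∈ Finset.range m,
          (Real.log ((ExtS cnt (i+1) z).card : ℝ) - Real.log ((ExtS cnt i z).card : ℝ))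
        = ∑ t : Fin m,
          (Real.log ((ExtS cnt ((t:ℕ)+1) z).card : ℝ) - Real.log ((ExtS cnt (t:ℕ) z).card : ℝ)) :=
      (Fin.sum_univ_eq_sum_range
        (fun i => Real.log ((ExtS cnt (i+1) z).card : ℝ) - Real.log ((ExtS cnt i z).card : ℝ)) m).symm
    rw [htel, hconv, ← Finset.sum_sub_distrib]
  rw [Finset.sum_congr rfl hstep2]
  -- Step III : swap sums and apply the per-draw bound
  rw [Finset.sum_comm, Finset.mul_sum]
  have hperT : ∀ t : Fin m,
      ((T.card : ℝ))⁻¹ * ∑ z ∈ T,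
        (Real.log ((ExtS cnt ((t:ℕ)+1) z).card : ℝ) - Real.log ((ExtS cnt (t:ℕ) z).card : ℝ)
          - Real.log ((cnt (z (Fin.castLE hmn.le t)) : ℝ) / n))
      ≤ ((q:ℝ)-1)/((n:ℝ)-1) * (((t:ℕ):ℝ)/((n:ℝ)-(t:ℕ))) := by
    intro t
    have htn : (t:ℕ) < n := lt_trans t.isLt hmn
    have hn2 : 1 < n := by omega
    have hpos : Fin.castLE hmn.le t = (⟨(t:ℕ), htn⟩ : Fin n) := rfl
    rw [hpos]
    exact per_t cnt hsum hn2 hTcpos htn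
  calc ∑ t : Fin m, ((T.card : ℝ))⁻¹ * ∑ z ∈ T,
        (Real.log ((ExtS cnt ((t:ℕ)+1) z).card : ℝ) - Real.log ((ExtS cnt (t:ℕ) z).card : ℝ)
          - Real.log ((cnt (z (Fin.castLE hmn.le t)) : ℝ) / n))
      ≤ ∑ t : Fin m, ((q:ℝ)-1)/((n:ℝ)-1) * (((t:ℕ):ℝ)/((n:ℝ)-(t:ℕ))) :=
        Finset.sum_le_sum (fun t _ => hperT t)
    _ = ((q:ℝ)-1)/((n:ℝ)-1) * ∑ t ∈ Finset.range m, (t:ℝ)/((n:ℝ)-t) := by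
        rw [Finset.mul_sum]
        exact Fin.sum_univ_eq_sum_range (fun i => ((q:ℝ)-1)/((n:ℝ)-1) * ((i:ℝ)/((n:ℝ)-i))) m

/-- Stam's bound on sampling without vs. with replacement: for m < n draws from an urn of
n balls of q colors (with color counts cnt), the KL divergence between the without-replacement
law of m draws and the i.i.d. law satisfies
D ≤ ((q-1)/(n-1)) ∑_{t=1}^{m-1} t/(n-t), and hence
D ≤ (q-1)·log((n-1)/(n-m)) + O(q), with an O(q) term C·q for a universal constant C. -/
theorem stam_sampling_bound :
    ∃ C : ℝ, ∀ (q n m : ℕ), 0 < q → ∀ (hmn : m < n),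
      ∀ cnt : Fin q → ℕ, ∑ i, cnt i = n →
      let p : Fin q → ℝ := fun i => (cnt i : ℝ) / n
      let T : Finset (Fin n → Fin q) := Finset.univ.filter
        fun z => ∀ i, (Finset.univ.filter fun t => z t = i).card = cnt i
      -- law of the first m coordinates of a uniform draw from the type class
      let Pm : (Fin m → Fin q) → ℝ := fun x =>
        ((T.filter fun z => ∀ t : Fin m, z (Fin.castLE hmn.le t) = x t).card : ℝ) / T.card
      let D : ℝ := ∑ x : Fin m → Fin q, Pm x * Real.log (Pm x / ∏ t, p (x t))
      D ≤ ((q : ℝ) - 1) / ((n : ℝ) - 1) * ∑ t ∈ Finset.range m, (t : ℝ) / ((n : ℝ) - t)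
      ∧ D ≤ ((q : ℝ) - 1) * Real.log (((n : ℝ) - 1) / ((n : ℝ) - m)) + C * q := by
  refine ⟨2, ?_⟩
  intro q n m hq hmn cnt hsum
  have h1 := stam_main q n m hq hmn cnt hsum
  have h2 := bound_two q n m hq hmn
  exact ⟨h1, le_trans h1 h2⟩
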